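/- arXiv:1103.1855 — 2 statements merged into one kernel-verified Lean document; each statement's English description precedes it below -/
import Mathlib

section
/- In the Witt ring W(Z/4Z), four times the class of the rank-one form ⟨-1⟩ equals the class of the rank-two form ω with matrix ((2,1),(1,2)); explicitly, the orthogonal sum ⟨-1⟩⊕⟨-1⟩⊕⟨-1⟩⊕⟨-1⟩ is isometric to ω⊕⟨-1⟩⊕⟨1⟩. -/
open Matrix

namespace WittZ4

/-- A nondegenerate symmetric bilinear form on a finitely generated free
`Z/4Z`-module, presented by its Gram matrix. -/
structure QF where
  m : ℕ
  G : Matrix (Fin m) (Fin m) (ZMod 4)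
  symm : G.IsSymm
  nondeg : IsUnit G.det

/-- Isometry of forms: an invertible change of basis carrying one Gram matrix
to the other. -/
def Isometric (a b : QF) : Prop :=
  ∃ h : a.m = b.m, ∃ P : Matrix (Fin b.m) (Fin b.m) (ZMod 4), IsUnit P.det ∧
    Pᵀ * (Matrix.reindex (finCongr h) (finCongr h) a.G) * P = b.G

/-- Orthogonal (block-diagonal) sum of forms. -/
def orthSum (a b : QF) : QF where
  m := a.m + b.m
  G := Matrix.reindex finSumFinEquiv finSumFinEquiv (Matrix.fromBlocks a.G 0 0 b.G)
  symm := by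
    simp [Matrix.IsSymm, Matrix.transpose_reindex, Matrix.fromBlocks_transpose,
      a.symm.eq, b.symm.eq]
  nondeg := by
    rw [Matrix.det_reindex_self, Matrix.det_fromBlocks_zero₂₁]
    exact a.nondeg.mul b.nondeg

end WittZ4

namespace WittZ4

/-- The bilinear pairing associated to a form. -/
def pair (a : QF) (x y : Fin a.m → ZMod 4) : ZMod 4 :=
  dotProduct x (a.G.mulVec y)

/-- The orthogonal complement of a submodule with respect to a form. -/
def orthCompl (a : QF) (N : Submodule (ZMod 4) (Fin a.m → ZMod 4)) :
    Submodule (ZMod 4) (Fin a.m → ZMod 4) where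
  carrier := {x | ∀ y ∈ N, pair a x y = 0}
  zero_mem' := by intro y hy; simp [pair]
  add_mem' := by
    intro x z hx hz y hy
    have h1 : pair a x y = 0 := hx y hy
    have h2 : pair a z y = 0 := hz y hy
    simp only [pair] at h1 h2
    simp [pair, add_dotProduct, h1, h2]
  smul_mem' := by
    intro c x hx y hy
    have h1 : pair a x y = 0 := hx y hy
    simp only [pair] at h1
    simp [pair, smul_dotProduct, h1]

/-- A form is split if the underlying module contains a direct summand `N`
with `N = N^⊥`. -/
def IsSplit (a : QF) : Prop :=
  ∃ N : Submodule (ZMod 4) (Fin a.m → ZMod 4),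
    (∃ N', IsCompl N N') ∧ N = orthCompl a N

/-- Witt equivalence: two forms represent the same class in the Witt ring iff
they become isometric after adding split forms. -/
def WittEquiv (a b : QF) : Prop :=
  ∃ s t : QF, IsSplit s ∧ IsSplit t ∧ Isometric (orthSum a s) (orthSum b t)

/-- The zero form (on the zero module). -/
def zeroForm : QF :=
  ⟨0, 1, Matrix.isSymm_one, by simp⟩

/-- The rank-one form `⟨1⟩`. -/
def oneForm : QF :=
  ⟨1, Matrix.of fun _ _ => (1 : ZMod 4), by ext i j; rfl,
    by simp [Matrix.det_fin_one]⟩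

/-- The rank-one form `⟨-1⟩`. -/
def negOneForm : QF :=
  ⟨1, Matrix.of fun _ _ => (-1 : ZMod 4), by ext i j; rfl,
    by simp [Matrix.det_fin_one]⟩

/-- The rank-two form `ω` with Gram matrix `((2,1),(1,2))`. -/
def omegaForm : QF :=
  ⟨2, !![2, 1; 1, 2], by decide,
    IsUnit.of_mul_eq_one 3 (by decide)⟩

/-- `j` orthogonal copies of a form. -/
def copies : ℕ → QF → QF
  | 0, _ => zeroForm
  | j + 1, a => orthSum (copies j a) a

end WittZ4

namespace WittZ4

/-- Auxiliary split form `⟨-1⟩⊕⟨1⟩` with Gram matrix `diag(3,1)`, on `Fin 2`. -/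
@[reducible] def hypForm : QF :=
  ⟨2, !![3, 0; 0, 1], by decide, IsUnit.of_mul_eq_one 3 (by decide)⟩

lemma hypForm_pair (x y : Fin 2 → ZMod 4) :
    pair hypForm x y = 3 * x 0 * y 0 + x 1 * y 1 := by
  simp [pair, hypForm, dotProduct, Matrix.mulVec, Fin.sum_univ_two]
  ring

lemma hypForm_isSplit : IsSplit hypForm := by
  show ∃ N : Submodule (ZMod 4) (Fin 2 → ZMod 4),
    (∃ N', IsCompl N N') ∧ N = orthCompl hypForm N
  refine ⟨Submodule.span (ZMod 4) {![1,1]},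
    ⟨Submodule.span (ZMod 4) {![1,0]}, ?_, ?_⟩, ?_⟩
  · rw [disjoint_iff]
    ext x
    simp only [Submodule.mem_inf, Submodule.mem_span_singleton, Submodule.mem_bot]
    constructor
    · rintro ⟨⟨a, ha⟩, ⟨b, hb⟩⟩
      have h1 : a = x 1 := by have := congrFun ha 1; simpa using this
      have h2 : (0 : ZMod 4) = x 1 := by have := congrFun hb 1; simpa using this
      have h0 : a = x 0 := by have := congrFun ha 0; simpa using this
      funext i
      fin_cases i
      · simp only [Fin.mk_zero, Pi.zero_apply, ← h0, h1, ← h2]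
      · simp only [Fin.mk_one, Pi.zero_apply, ← h2]
    · rintro rfl
      exact ⟨⟨0, by simp⟩, ⟨0, by simp⟩⟩
  · rw [codisjoint_iff, eq_top_iff]
    intro x _
    have hx : x = (x 1) • ![1,1] + (x 0 - x 1) • ![1,0] := by
      funext i; fin_cases i <;>
        simp [Fin.mk_zero, Fin.mk_one]
    rw [hx]
    exact Submodule.add_mem_sup
      (Submodule.smul_mem _ _ (Submodule.mem_span_singleton_self _))
      (Submodule.smul_mem _ _ (Submodule.mem_span_singleton_self _))
  · ext x
    constructor
    · intro hx y hy
      obtain ⟨a, rfl⟩ := Submodule.mem_span_singleton.mp hx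
      obtain ⟨b, rfl⟩ := Submodule.mem_span_singleton.mp hy
      rw [hypForm_pair]
      have h4 : (4 : ZMod 4) = 0 := rfl
      simp only [Pi.smul_apply, Matrix.cons_val_zero, Matrix.cons_val_one,
        Matrix.head_cons, smul_eq_mul, mul_one]
      linear_combination a * b * h4
    · intro h
      have hv := h ![1,1] (Submodule.mem_span_singleton_self _)
      rw [hypForm_pair] at hv
      simp only [Matrix.cons_val_zero, Matrix.cons_val_one, Matrix.head_cons,
        mul_one] at hv
      refine Submodule.mem_span_singleton.mpr ⟨x 0, ?_⟩
      funext i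
      fin_cases i
      · simp [Fin.mk_zero]
      · simp only [Fin.mk_one, Pi.smul_apply, Matrix.cons_val_one,
          Matrix.head_cons, smul_eq_mul, mul_one, Matrix.cons_val_zero]
        have h4 : (4 : ZMod 4) = 0 := rfl
        linear_combination -hv + x 0 * h4

lemma zeroForm_isSplit : IsSplit zeroForm := by
  refine ⟨⊤, ⟨⊥, isCompl_top_bot⟩, ?_⟩
  ext x
  simp only [Submodule.mem_top, orthCompl, Submodule.mem_mk, AddSubmonoid.mem_mk,
    AddSubsemigroup.mem_mk, Set.mem_setOf_eq, true_iff]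
  intro y _
  simp only [pair, dotProduct]
  exact Finset.sum_eq_zero fun i _ => Fin.elim0 (Fin.cast (rfl : zeroForm.m = 0) i)

/-- In `W(Z/4Z)`, `4⟨-1⟩ = [ω]`: explicitly, `⟨-1⟩⊕⟨-1⟩⊕⟨-1⟩⊕⟨-1⟩` is isometric
to `ω⊕⟨-1⟩⊕⟨1⟩`, and hence `copies 4 ⟨-1⟩` is Witt equivalent to `ω`. -/
theorem four_negOne_eq_omega :
    Isometric (copies 4 negOneForm) (orthSum (orthSum omegaForm negOneForm) oneForm) ∧
    WittEquiv (copies 4 negOneForm) omegaForm := by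
  constructor
  · exact ⟨rfl, !![1,0,2,1;1,3,2,3;0,1,2,3;0,0,1,2],
      IsUnit.of_mul_eq_one 1 (by decide), by decide⟩
  · refine ⟨zeroForm, hypForm, zeroForm_isSplit, hypForm_isSplit, ?_⟩
    exact ⟨rfl, !![1,0,2,1;1,3,2,3;0,1,2,3;0,0,1,2],
      IsUnit.of_mul_eq_one 1 (by decide), by decide⟩

end WittZ4
end

section
/- The rank-two symmetric bilinear form ω on (Z/4Z)² with matrix ((2,1),(1,2)) is not split: there is no split form σ such that ω ⊕ σ is split. Equivalently, for any n, the form ω ⊕ H_n (where H_n is the split form of rank 2n) contains no totally isotropic direct summand of rank n+1. -/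
open Matrix

namespace WittZ4

/-- The Gaussian integer `i`. -/
def gi : GaussianInt := ⟨0, 1⟩

/-- The additive character `q ↦ i^q` on `ZMod 4` with values in `ℤ[i]`. -/
def ee (q : ZMod 4) : GaussianInt := gi ^ q.val

lemma ee_add : ∀ a b : ZMod 4, ee (a + b) = ee a * ee b := by decide

lemma ee_zero : ee 0 = 1 := rfl

lemma ee_two_eq_one_or : ∀ c : ZMod 4, ee (2 * c) = 1 ∨ ee (2 * c) = -1 := by decide

lemma ee_two_eq_one_iff : ∀ c : ZMod 4, ee (2 * c) = 1 ↔ 2 * c = 0 := by decide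

lemma exists_half : ∀ c : ZMod 4, 2 * c = 0 → ∃ d, c = 2 * d := by decide

/-- The Gauss sum of a form. -/
def gauss (a : QF) : GaussianInt := ∑ x : Fin a.m → ZMod 4, ee (pair a x x)

lemma pair_comm (a : QF) (x y : Fin a.m → ZMod 4) : pair a x y = pair a y x := by
  unfold pair
  rw [Matrix.dotProduct_mulVec, ← Matrix.mulVec_transpose, a.symm.eq]
  exact dotProduct_comm _ _

lemma pair_add_left (a : QF) (x x' y : Fin a.m → ZMod 4) :
    pair a (x + x') y = pair a x y + pair a x' y := by
  simp [pair, add_dotProduct]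

lemma pair_add_right (a : QF) (x y y' : Fin a.m → ZMod 4) :
    pair a x (y + y') = pair a x y + pair a x y' := by
  simp [pair, Matrix.mulVec_add, dotProduct_add]

lemma pair_smul_left (a : QF) (c : ZMod 4) (x y : Fin a.m → ZMod 4) :
    pair a (c • x) y = c * pair a x y := by
  simp [pair, smul_dotProduct]

lemma pair_smul_smul (a : QF) (c c' : ZMod 4) (x y : Fin a.m → ZMod 4) :
    pair a (c • x) (c' • y) = c * c' * pair a x y := by
  simp [pair, smul_dotProduct, Matrix.mulVec_smul, dotProduct_smul,
    smul_eq_mul]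
  ring

lemma pair_zero_right (a : QF) (x : Fin a.m → ZMod 4) : pair a x 0 = 0 := by
  simp [pair]

/-- The Gauss sum of a split form is a positive natural number. -/
lemma gauss_split (a : QF) (h : IsSplit a) : ∃ k : ℕ, 0 < k ∧ gauss a = k := by
  classical
  obtain ⟨N, ⟨N', hc⟩, hN⟩ := h
  -- expand the sum over the direct sum decomposition
  have h1 : gauss a = ∑ y : N, ∑ z : N',
      ee (pair a ((y : Fin a.m → ZMod 4) + z) ((y : Fin a.m → ZMod 4) + z)) := by
    rw [gauss, ← ((Submodule.prodEquivOfIsCompl N N' hc).toEquiv.sum_comp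
      (fun x => ee (pair a x x))), Fintype.sum_prod_type]
    rfl
  -- y is isotropic and orthogonal to everything in N
  have hyy : ∀ y : N, pair a (y : Fin a.m → ZMod 4) (y : Fin a.m → ZMod 4) = 0 := by
    intro y
    have : (y : Fin a.m → ZMod 4) ∈ orthCompl a N := hN ▸ y.2
    exact this _ y.2
  have hexp : ∀ (y : N) (z : N'),
      pair a ((y : Fin a.m → ZMod 4) + z) ((y : Fin a.m → ZMod 4) + z)
        = pair a (z : Fin a.m → ZMod 4) z + 2 * pair a (y : Fin a.m → ZMod 4) z := by
    intro y z
    rw [pair_add_left, pair_add_right, pair_add_right, hyy y,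
      pair_comm a (z : Fin a.m → ZMod 4) (y : Fin a.m → ZMod 4)]
    ring
  have h2 : gauss a = ∑ z : N', ee (pair a (z : Fin a.m → ZMod 4) z) *
      ∑ y : N, ee (2 * pair a (y : Fin a.m → ZMod 4) z) := by
    rw [h1, Finset.sum_comm]
    refine Finset.sum_congr rfl fun z _ => ?_
    rw [Finset.mul_sum]
    refine Finset.sum_congr rfl fun y _ => ?_
    rw [hexp y z, ee_add]
  -- the goodness predicate
  set Good : N' → Prop := fun z => ∀ y : N, ee (2 * pair a (y : Fin a.m → ZMod 4) z) = 1
    with hGood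
  have hterm : ∀ z : N', ee (pair a (z : Fin a.m → ZMod 4) z) *
      (∑ y : N, ee (2 * pair a (y : Fin a.m → ZMod 4) z))
        = if Good z then (Fintype.card N : GaussianInt) else 0 := by
    intro z
    by_cases hg : Good z
    · rw [if_pos hg]
      -- inner sum is the cardinality
      have hs : (∑ y : N, ee (2 * pair a (y : Fin a.m → ZMod 4) z))
          = (Fintype.card N : GaussianInt) := by
        calc (∑ y : N, ee (2 * pair a (y : Fin a.m → ZMod 4) z))
            = ∑ _y : N, (1 : GaussianInt) := Finset.sum_congr rfl fun y _ => hg y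
          _ = (Fintype.card N : GaussianInt) := by simp
      -- z has order dividing 2, hence is isotropic
      have h2z : (2 : ZMod 4) • (z : Fin a.m → ZMod 4) ∈ N := by
        rw [hN]
        intro w hw
        rw [pair_smul_left, pair_comm a (z : Fin a.m → ZMod 4) w, ← ee_two_eq_one_iff]
        exact hg ⟨w, hw⟩
      have h2z' : (2 : ZMod 4) • (z : Fin a.m → ZMod 4) ∈ N' := N'.smul_mem _ z.2
      have h2z0 : (2 : ZMod 4) • (z : Fin a.m → ZMod 4) = 0 := by
        have := hc.inf_eq_bot
        have hm : (2 : ZMod 4) • (z : Fin a.m → ZMod 4) ∈ N ⊓ N' := ⟨h2z, h2z'⟩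
        rw [this] at hm
        exact hm
      -- so z = 2 • w for some w, hence pair z z = 0
      have hzi : ∀ i, ∃ d, (z : Fin a.m → ZMod 4) i = 2 * d := by
        intro i
        refine exists_half _ ?_
        have := congrFun h2z0 i
        simpa using this
      choose w hw using hzi
      have hzw : (z : Fin a.m → ZMod 4) = (2 : ZMod 4) • w := by
        funext i; simp [hw i, Pi.smul_apply, smul_eq_mul]
      have hz0 : pair a (z : Fin a.m → ZMod 4) z = 0 := by
        rw [hzw, pair_smul_smul]
        have h4 : (2 : ZMod 4) * 2 = 0 := by decide
        rw [h4, zero_mul]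
      rw [hz0, ee_zero, one_mul, hs]
    · rw [if_neg hg]
      obtain ⟨y₀, hy₀⟩ := not_forall.mp hg
      have hy₀' : ee (2 * pair a (y₀ : Fin a.m → ZMod 4) z) = -1 := by
        rcases ee_two_eq_one_or (pair a (y₀ : Fin a.m → ZMod 4) z) with h | h
        · exact absurd h hy₀
        · exact h
      have hA : (∑ y : N, ee (2 * pair a ((y₀ : Fin a.m → ZMod 4) + y) z))
          = ∑ y : N, ee (2 * pair a (y : Fin a.m → ZMod 4) z) :=
        Fintype.sum_equiv (Equiv.addLeft y₀) _ _ (fun y => rfl)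
      have hB : (∑ y : N, ee (2 * pair a ((y₀ : Fin a.m → ZMod 4) + y) z))
          = -∑ y : N, ee (2 * pair a (y : Fin a.m → ZMod 4) z) := by
        rw [← Finset.sum_neg_distrib]
        refine Finset.sum_congr rfl fun y _ => ?_
        rw [pair_add_left, mul_add, ee_add, hy₀']
        ring
      have hz : (∑ y : N, ee (2 * pair a (y : Fin a.m → ZMod 4) z)) = 0 := by
        have h2S : (2 : GaussianInt) * (∑ y : N, ee (2 * pair a (y : Fin a.m → ZMod 4) z)) = 0 := by
          linear_combination hB - hA
        rcases mul_eq_zero.mp h2S with h | h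
        · exact absurd h (by decide)
        · exact h
      rw [hz, mul_zero]
  refine ⟨∑ z : N', if Good z then Fintype.card N else 0, ?_, ?_⟩
  · refine lt_of_lt_of_le ?_ (Finset.single_le_sum (f := fun z : N' =>
      if Good z then Fintype.card N else 0) (fun _ _ => Nat.zero_le _)
      (Finset.mem_univ (0 : N')))
    have hg0 : Good 0 := by
      intro y
      have : ((0 : N') : Fin a.m → ZMod 4) = 0 := rfl
      rw [this, pair_zero_right, mul_zero, ee_zero]
    show 0 < if Good 0 then Fintype.card N else 0
    rw [if_pos hg0]
    exact Fintype.card_pos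
  · rw [h2]
    rw [Nat.cast_sum]
    refine Finset.sum_congr rfl fun z _ => ?_
    rw [hterm z]
    split <;> simp

/-- The equivalence identifying functions on `Fin (a.m + b.m)` with pairs. -/
def splitEquiv (m n : ℕ) : ((Fin m → ZMod 4) × (Fin n → ZMod 4)) ≃ (Fin (m + n) → ZMod 4) where
  toFun p := Sum.elim p.1 p.2 ∘ finSumFinEquiv.symm
  invFun x := (fun i => x (finSumFinEquiv (Sum.inl i)), fun j => x (finSumFinEquiv (Sum.inr j)))
  left_inv p := by
    ext i <;> simp
  right_inv x := by
    funext i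
    have h := Equiv.apply_symm_apply finSumFinEquiv i
    rcases hs : finSumFinEquiv.symm i with s | s <;> rw [hs] at h <;>
      simp [Function.comp, hs] <;> simp only [finSumFinEquiv_apply_left,
        finSumFinEquiv_apply_right] at h <;> rw [h]

lemma pair_orthSum (a b : QF) (u : Fin a.m → ZMod 4) (v : Fin b.m → ZMod 4) :
    pair (orthSum a b) (splitEquiv a.m b.m (u, v)) (splitEquiv a.m b.m (u, v))
      = pair a u u + pair b v v := by
  have hx : (splitEquiv a.m b.m (u, v)) = Sum.elim u v ∘ finSumFinEquiv.symm := rfl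
  unfold pair
  rw [hx]
  have hG : (orthSum a b).G = (Matrix.fromBlocks a.G 0 0 b.G).submatrix
      finSumFinEquiv.symm finSumFinEquiv.symm := by
    rw [show (orthSum a b).G = Matrix.reindex finSumFinEquiv finSumFinEquiv
      (Matrix.fromBlocks a.G 0 0 b.G) from rfl, Matrix.reindex_apply]
  have hsm := Matrix.submatrix_mulVec_equiv (Matrix.fromBlocks a.G 0 0 b.G)
    (Sum.elim u v ∘ finSumFinEquiv.symm) (finSumFinEquiv.symm : Fin (a.m + b.m) ≃ _)
    (finSumFinEquiv.symm : Fin (a.m + b.m) ≃ _)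
  rw [hG]
  erw [hsm]
  have hcomp : (Sum.elim u v ∘ finSumFinEquiv.symm) ∘ (finSumFinEquiv.symm).symm
      = Sum.elim u v := by
    funext s; simp
  rw [hcomp, Matrix.fromBlocks_mulVec]
  have hmv : Sum.elim (a.G *ᵥ (Sum.elim u v ∘ Sum.inl) + (0 : Matrix _ _ _) *ᵥ (Sum.elim u v ∘ Sum.inr))
      ((0 : Matrix _ _ _) *ᵥ (Sum.elim u v ∘ Sum.inl) + b.G *ᵥ (Sum.elim u v ∘ Sum.inr))
      = Sum.elim (a.G *ᵥ u) (b.G *ᵥ v) := by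
    simp [Sum.elim_comp_inl, Sum.elim_comp_inr]
  rw [hmv]
  show (∑ i : Fin (a.m + b.m), (Sum.elim u v ∘ finSumFinEquiv.symm) i *
      (Sum.elim (a.G *ᵥ u) (b.G *ᵥ v) ∘ finSumFinEquiv.symm) i) = _
  have hsum := Fintype.sum_equiv
    (finSumFinEquiv.symm : Fin (a.m + b.m) ≃ (Fin a.m ⊕ Fin b.m))
    (fun i : Fin (a.m + b.m) => (Sum.elim u v ∘ finSumFinEquiv.symm) i *
      (Sum.elim (a.G *ᵥ u) (b.G *ᵥ v) ∘ finSumFinEquiv.symm) i)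
    (fun s : Fin a.m ⊕ Fin b.m => Sum.elim u v s * Sum.elim (a.G *ᵥ u) (b.G *ᵥ v) s)
    (fun i => rfl)
  rw [hsum, Fintype.sum_sum_type]
  simp [pair, dotProduct]

lemma gauss_orthSum (a b : QF) : gauss (orthSum a b) = gauss a * gauss b := by
  have h0 : gauss (orthSum a b)
      = ∑ x : Fin (a.m + b.m) → ZMod 4, ee (pair (orthSum a b) x x) := rfl
  rw [h0, ← Equiv.sum_comp (splitEquiv a.m b.m) (fun x => ee (pair (orthSum a b) x x)),
    Fintype.sum_prod_type]
  rw [gauss, gauss, Finset.sum_mul_sum]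
  refine Finset.sum_congr rfl fun u _ => Finset.sum_congr rfl fun v _ => ?_
  show ee (pair (orthSum a b) (splitEquiv a.m b.m (u, v)) (splitEquiv a.m b.m (u, v))) = _
  rw [pair_orthSum, ee_add]

lemma gauss_omega : gauss omegaForm = -8 := by decide +kernel

end WittZ4

namespace WittZ4

/-- The rank-two form `ω = ((2,1),(1,2))` over `Z/4Z` is not split, and there is
no split form `σ` such that `ω ⊕ σ` is split. -/
theorem omega_not_stably_split :
    ¬ IsSplit omegaForm ∧
    ∀ σ : QF, IsSplit σ → ¬ IsSplit (orthSum omegaForm σ) := by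
  constructor
  · intro h
    obtain ⟨k, hk, he⟩ := gauss_split _ h
    rw [gauss_omega] at he
    have hre := congrArg Zsqrtd.re he
    simp [Zsqrtd.re_natCast] at hre
  · intro σ hσ hsplit
    obtain ⟨k₁, hk₁, he₁⟩ := gauss_split _ hsplit
    obtain ⟨k₂, hk₂, he₂⟩ := gauss_split _ hσ
    have hmul := gauss_orthSum omegaForm σ
    rw [he₁, gauss_omega, he₂] at hmul
    have hre := congrArg Zsqrtd.re hmul
    simp [Zsqrtd.re_natCast] at hre
    omega

end WittZ4
end
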